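/- With the SubsetSum reduction vectors u, v_i, w_i in ℝ^{n+1} as defined, if points x_i ∈ {v_i, w_i} for i = 1,…,n satisfy 0 = ∑_{i=1}^n λ_i x_i + λ_{n+1} u for reals λ_i with ∑_{i=1}^{n+1} λ_i = 1, then all λ_i are equal to 1/(n+1), and the index set I = {i : x_i = v_i} satisfies ∑_{i∈I} a_i = b. -/

import Mathlib

/-- The vector u of the SubsetSum reduction: first coordinate -b, all others -1. -/
noncomputable def uVec (n : ℕ) (b : ℤ) : Fin (n + 1) → ℝ :=
  fun j => if (j : ℕ) = 0 then (-b : ℝ) else -1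

/-- The vector v_i: first coordinate a_i, coordinate i+1 equal to 1, all others 0. -/
noncomputable def vVec (n : ℕ) (a : Fin n → ℤ) (i : Fin n) : Fin (n + 1) → ℝ :=
  fun j => if (j : ℕ) = 0 then (a i : ℝ) else if (j : ℕ) = (i : ℕ) + 1 then 1 else 0

/-- The vector w_i: first coordinate 0, coordinate i+1 equal to 1, all others 0. -/
noncomputable def wVec (n : ℕ) (i : Fin n) : Fin (n + 1) → ℝ :=
  fun j => if (j : ℕ) = 0 then 0 else if (j : ℕ) = (i : ℕ) + 1 then 1 else 0

open Finset in
/-- if 0 is an affine combination of points x_i ∈ {v_i, w_i} and u, then all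
coefficients equal 1/(n+1) and I = {i : x_i = v_i} satisfies ∑_{i ∈ I} a_i = b. -/
theorem stmt7 (n : ℕ) (a : Fin n → ℤ) (b : ℤ)
    (x : Fin n → Fin (n + 1) → ℝ)
    (hx : ∀ i, x i = vVec n a i ∨ x i = wVec n i)
    (lam : Fin n → ℝ) (lamu : ℝ)
    (hsum : (∑ i, lam i) + lamu = 1)
    (hzero : (0 : Fin (n + 1) → ℝ) = (∑ i, lam i • x i) + lamu • uVec n b) :
    (∀ i, lam i = 1 / (n + 1)) ∧ lamu = 1 / (n + 1) ∧
      (∑ i ∈ Finset.univ.filter fun i => x i = vVec n a i, a i) = b := by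
  have hcoord : ∀ j : Fin (n+1), 0 = (∑ i, lam i * x i j) + lamu * uVec n b j := by
    intro j
    have h := congrFun hzero j
    simpa [Finset.sum_apply, Pi.add_apply, Pi.smul_apply, smul_eq_mul] using h
  -- x k at coordinate i+1
  have hxval : ∀ (k i : Fin n), x k (⟨(i:ℕ)+1, by omega⟩ : Fin (n+1)) =
      if k = i then 1 else 0 := by
    intro k i
    rcases hx k with h | h <;> rw [h] <;> simp only [vVec, wVec] <;>
      split_ifs <;> simp_all [Fin.ext_iff]
  have hlam : ∀ i : Fin n, lam i = lamu := by
    intro i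
    have h := hcoord (⟨(i:ℕ)+1, by omega⟩ : Fin (n+1))
    have hu : uVec n b (⟨(i:ℕ)+1, by omega⟩ : Fin (n+1)) = -1 := by
      simp [uVec]
    rw [hu] at h
    have hs : (∑ k, lam k * x k (⟨(i:ℕ)+1, by omega⟩ : Fin (n+1))) = lam i := by
      rw [Finset.sum_congr rfl (fun k _ => by rw [hxval k i])]
      simp
    rw [hs] at h
    linarith
  have hlamu : lamu = 1 / (n + 1) := by
    have hs : (∑ i, lam i) = n * lamu := by
      rw [Finset.sum_congr rfl (fun i _ => hlam i)]
      simp [mul_comm]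
    rw [hs] at hsum
    have hpos : (0:ℝ) < n + 1 := by positivity
    field_simp
    linarith
  have hlam' : ∀ i, lam i = 1 / (n + 1) := fun i => (hlam i).trans hlamu
  refine ⟨hlam', hlamu, ?_⟩
  -- coordinate 0
  have h0 := hcoord 0
  have hu0 : uVec n b 0 = -b := by simp [uVec]
  rw [hu0] at h0
  have hx0 : ∀ i : Fin n, x i 0 =
      if x i = vVec n a i then (a i : ℝ) else 0 := by
    intro i
    by_cases h : x i = vVec n a i
    · rw [if_pos h, h]; simp [vVec]
    · rw [if_neg h]
      rcases hx i with h' | h'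
      · exact absurd h' h
      · rw [h']; simp [wVec]
  have hs : (∑ i, lam i * x i 0) =
      (1 / (n+1)) * ∑ i ∈ Finset.univ.filter (fun i => x i = vVec n a i), (a i : ℝ) := by
    rw [Finset.mul_sum, Finset.sum_filter]
    refine Finset.sum_congr rfl fun i _ => ?_
    rw [hx0 i, hlam' i]
    split_ifs <;> ring
  rw [hs, hlamu] at h0
  have hne : (1 / ((n:ℝ) + 1)) ≠ 0 := by positivity
  have key : (∑ i ∈ Finset.univ.filter (fun i => x i = vVec n a i), (a i : ℝ)) = b := by
    exact mul_left_cancel₀ hne (show (1/((n:ℝ)+1)) * _ = (1/((n:ℝ)+1)) * (b:ℝ) by linarith)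
  exact_mod_cast (by push_cast at key ⊢; exact key : ((∑ i ∈ Finset.univ.filter (fun i => x i = vVec n a i), a i : ℤ) : ℝ) = b)
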